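/- In the setting of the previous statement, the stabilizer in Sp(W) of the Lagrangian L_k = X_k ⊕ X'_{F,n−k} ⊕ τ Y'_{F,n−k} equals (GL(X_k) × Sp(W_{2n−2k,F})^τ) ⋉ N, where N is the unipotent radical of the parabolic P = Stab_{Sp(W)}(X_k), W_{2n−2k,F} = X'_{F,n−k} ⊕ Y'_{F,n−k}, and Sp(W_{2n−2k,F})^τ = c_τ Sp(W_{2n−2k,F}) c_τ^{−1} with c_τ the similitude acting by τ on X and identity on Y. -/

import Mathlib

open Module


theorem aux_tau_not {F E : Type*} [Field F] [Field E] [Algebra F E] [CharZero F]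
    (hquad : Module.finrank F E = 2)
    (τ : E) (hτ : τ ≠ 0) (htr : Algebra.trace F E τ = 0) (a : F) :
    τ ≠ algebraMap F E a := by
  intro ha
  rw [ha, Algebra.trace_algebraMap, hquad] at htr
  have ha0 : a = 0 := by
    have h2 : (2:ℕ) • a = 0 := htr
    simpa [two_smul] using h2
  exact hτ (by rw [ha, ha0, map_zero])

theorem aux_tausq {F E : Type*} [Field F] [Field E] [Algebra F E] [CharZero F]
    (hquad : Module.finrank F E = 2)
    (τ : E) (hτ : τ ≠ 0) (htr : Algebra.trace F E τ = 0) :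
    ∃ d : F, d ≠ 0 ∧ τ ^ 2 = algebraMap F E d := by
  have hfd : FiniteDimensional F E := FiniteDimensional.of_finrank_eq_succ hquad
  let b : Basis (Fin 2) F E := (finBasis F E).reindex (finCongr hquad)
  set M := Algebra.leftMulMatrix b τ with hM
  have htrM : M.trace = 0 := by
    have h := Algebra.trace_eq_matrix_trace b τ
    rw [htr] at h; exact h.symm
  have hadj : M.adjugate = M.trace • (1 : Matrix (Fin 2) (Fin 2) F) - M := by
    rw [Matrix.adjugate_fin_two, Matrix.trace_fin_two]
    ext i j
    fin_cases i <;> fin_cases j <;> simp [Matrix.one_apply] <;> ring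
  have hmul := Matrix.mul_adjugate M
  rw [hadj, htrM, zero_smul, zero_sub, Matrix.mul_neg] at hmul
  have hsq : M ^ 2 + M.det • (1 : Matrix (Fin 2) (Fin 2) F) = 0 := by
    rw [pow_two, ← hmul]; abel
  have hinj := Algebra.leftMulMatrix_injective b
  have key : Algebra.leftMulMatrix b (τ ^ 2 + algebraMap F E M.det) =
      Algebra.leftMulMatrix b 0 := by
    rw [map_add, map_pow, map_zero, AlgHom.commutes, Algebra.algebraMap_eq_smul_one]
    exact hsq
  have h0 : τ ^ 2 + algebraMap F E M.det = 0 := hinj key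
  refine ⟨-M.det, ?_, by rw [map_neg, eq_neg_iff_add_eq_zero]; exact h0⟩
  intro hd
  have hMd : M.det = 0 := by simpa using congrArg Neg.neg hd
  rw [hMd, map_zero, add_zero, pow_eq_zero_iff] at h0 <;> simp_all

section Aux
variable {E : Type*} [Field E] {n : ℕ} (k : ℕ)

/-- Projection onto the `X_k` block. -/
def auxXi (p : (Fin n → E) × (Fin n → E)) : (Fin n → E) × (Fin n → E) :=
  (fun i => if (i : ℕ) < k then p.1 i else 0, 0)

/-- Projection onto the `W'` block. -/
def auxSg (p : (Fin n → E) × (Fin n → E)) : (Fin n → E) × (Fin n → E) :=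
  (fun i => if (i : ℕ) < k then 0 else p.1 i, fun i => if (i : ℕ) < k then 0 else p.2 i)

/-- Projection onto the `Y_k` block. -/
def auxRh (p : (Fin n → E) × (Fin n → E)) : (Fin n → E) × (Fin n → E) :=
  (0, fun i => if (i : ℕ) < k then p.2 i else 0)

variable {k}

theorem auxXi_add (p q : (Fin n → E) × (Fin n → E)) :
    auxXi k (p + q) = auxXi k p + auxXi k q := by
  refine Prod.ext ?_ ?_ <;> funext i <;> simp [auxXi] <;> split <;> simp

theorem auxSg_add (p q : (Fin n → E) × (Fin n → E)) :
    auxSg k (p + q) = auxSg k p + auxSg k q := by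
  refine Prod.ext ?_ ?_ <;> funext i <;> simp [auxSg] <;> split <;> simp

theorem auxRh_add (p q : (Fin n → E) × (Fin n → E)) :
    auxRh k (p + q) = auxRh k p + auxRh k q := by
  refine Prod.ext ?_ ?_ <;> funext i <;> simp [auxRh] <;> split <;> simp

theorem auxXi_smul (c : E) (p : (Fin n → E) × (Fin n → E)) :
    auxXi k (c • p) = c • auxXi k p := by
  refine Prod.ext ?_ ?_ <;> funext i <;> simp [auxXi] <;> split <;> simp

theorem auxSg_smul (c : E) (p : (Fin n → E) × (Fin n → E)) :
    auxSg k (c • p) = c • auxSg k p := by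
  refine Prod.ext ?_ ?_ <;> funext i <;> simp [auxSg] <;> split <;> simp

theorem auxRh_smul (c : E) (p : (Fin n → E) × (Fin n → E)) :
    auxRh k (c • p) = c • auxRh k p := by
  refine Prod.ext ?_ ?_ <;> funext i <;> simp [auxRh] <;> split <;> simp

theorem aux_decomp (p : (Fin n → E) × (Fin n → E)) :
    auxXi k p + auxSg k p + auxRh k p = p := by
  refine Prod.ext ?_ ?_ <;> funext i <;> simp [auxXi, auxSg, auxRh] <;> split <;> simp

end Aux


set_option maxHeartbeats 1000000 in
/-- In the doubled symplectic space, the stabilizer in `Sp(W)` of the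
Lagrangian `L_k = X_k ⊕ X'_{F,n−k} ⊕ τ Y'_{F,n−k}` equals
`(GL(X_k) × Sp(W_{2n−2k,F})^τ) ⋉ N`: a symplectic automorphism `g` stabilizes `L_k`
iff `g = m·u` where `u` lies in the unipotent radical `N` of `Stab(X_k)` and `m` is a
Levi element stabilizing `X_k`, `Y_k`, `W_{2n−2k}` and the `τ`-conjugated rational form
`c_τ(W_{2n−2k,F}) = τX'_{F} ⊕ Y'_{F}`. -/
theorem stmt11
    (F E : Type*) [Field F] [Field E] [Algebra F E] [CharZero F]
    (hquad : Module.finrank F E = 2)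
    (τ : E) (hτ : τ ≠ 0) (htr : Algebra.trace F E τ = 0)
    (n k : ℕ) (hk : k ≤ n)
    (ω : ((Fin n → E) × (Fin n → E)) → ((Fin n → E) × (Fin n → E)) → E)
    (hω : ∀ p r, ω p r = ∑ i : Fin n, (p.1 i * r.2 i - p.2 i * r.1 i))
    (Lk Xk Yk W' cτWF : Set ((Fin n → E) × (Fin n → E)))
    (hLk : Lk = {p | (∀ i : Fin n, (i : ℕ) < k → p.2 i = 0) ∧
      ∀ i : Fin n, k ≤ (i : ℕ) →
        ((∃ a : F, p.1 i = algebraMap F E a) ∧ (∃ b : F, p.2 i = τ * algebraMap F E b))})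
    (hXk : Xk = {p | (∀ i : Fin n, k ≤ (i : ℕ) → p.1 i = 0) ∧ p.2 = 0})
    (hYk : Yk = {p | p.1 = 0 ∧ ∀ i : Fin n, k ≤ (i : ℕ) → p.2 i = 0})
    (hW' : W' = {p | ∀ i : Fin n, (i : ℕ) < k → (p.1 i = 0 ∧ p.2 i = 0)})
    (hcτWF : cτWF = {p | p ∈ W' ∧ ∀ i : Fin n, k ≤ (i : ℕ) →
      ((∃ a : F, p.1 i = τ * algebraMap F E a) ∧ (∃ b : F, p.2 i = algebraMap F E b))}) :
    ∀ g : ((Fin n → E) × (Fin n → E)) ≃ₗ[E] ((Fin n → E) × (Fin n → E)),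
      (∀ p r, ω (g p) (g r) = ω p r) →
      (((∀ p ∈ Lk, g p ∈ Lk) ∧ (∀ p ∈ Lk, g.symm p ∈ Lk)) ↔
        ∃ m u : ((Fin n → E) × (Fin n → E)) ≃ₗ[E] ((Fin n → E) × (Fin n → E)),
          (∀ p r, ω (m p) (m r) = ω p r) ∧ (∀ p r, ω (u p) (u r) = ω p r) ∧
          (∀ p, g p = m (u p)) ∧
          -- m lies in the Levi subgroup GL(X_k) × Sp(W_{2n-2k,F})^τ
          ((∀ p ∈ Xk, m p ∈ Xk) ∧ (∀ p ∈ Yk, m p ∈ Yk) ∧ (∀ p ∈ W', m p ∈ W') ∧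
            (∀ p ∈ cτWF, m p ∈ cτWF)) ∧
          -- u lies in the unipotent radical N of Stab(X_k)
          ((∀ p ∈ Xk, u p = p) ∧
            (∀ p, (∀ r ∈ Xk, ω p r = 0) → u p - p ∈ Xk))) := by
    classical
  have hfd : FiniteDimensional F E := FiniteDimensional.of_finrank_eq_succ hquad
  have htF : ∀ a : F, τ ≠ algebraMap F E a := aux_tau_not hquad τ hτ htr
  obtain ⟨d, hd0, hdsq⟩ := aux_tausq hquad τ hτ htr
  intro g hg
  -- membership unfolding
  have mem_Lk : ∀ p : (Fin n → E) × (Fin n → E), p ∈ Lk ↔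
      ((∀ i : Fin n, (i : ℕ) < k → p.2 i = 0) ∧ ∀ i : Fin n, k ≤ (i : ℕ) →
        ((∃ a : F, p.1 i = algebraMap F E a) ∧ (∃ b : F, p.2 i = τ * algebraMap F E b))) :=
    fun p => by rw [hLk]; exact Iff.rfl
  have mem_Xk : ∀ p : (Fin n → E) × (Fin n → E), p ∈ Xk ↔
      ((∀ i : Fin n, k ≤ (i : ℕ) → p.1 i = 0) ∧ p.2 = 0) := fun p => by rw [hXk]; exact Iff.rfl
  have mem_Yk : ∀ p : (Fin n → E) × (Fin n → E), p ∈ Yk ↔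
      (p.1 = 0 ∧ ∀ i : Fin n, k ≤ (i : ℕ) → p.2 i = 0) := fun p => by rw [hYk]; exact Iff.rfl
  have mem_W : ∀ p : (Fin n → E) × (Fin n → E), p ∈ W' ↔
      (∀ i : Fin n, (i : ℕ) < k → (p.1 i = 0 ∧ p.2 i = 0)) := fun p => by rw [hW']; exact Iff.rfl
  have mem_C : ∀ p : (Fin n → E) × (Fin n → E), p ∈ cτWF ↔
      (p ∈ W' ∧ ∀ i : Fin n, k ≤ (i : ℕ) →
        ((∃ a : F, p.1 i = τ * algebraMap F E a) ∧ (∃ b : F, p.2 i = algebraMap F E b))) :=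
    fun p => by rw [hcτWF]; exact Iff.rfl
  -- bilinearity of ω
  have hωadd1 : ∀ a b c, ω (a + b) c = ω a c + ω b c := by
    intro a b c
    rw [hω, hω, hω, ← Finset.sum_add_distrib]
    exact Finset.sum_congr rfl fun i _ => by simp; ring
  have hωadd2 : ∀ a b c, ω a (b + c) = ω a b + ω a c := by
    intro a b c
    rw [hω, hω, hω, ← Finset.sum_add_distrib]
    exact Finset.sum_congr rfl fun i _ => by simp; ring
  have hωsub1 : ∀ a b c, ω (a - b) c = ω a c - ω b c := by
    intro a b c
    rw [hω, hω, hω, ← Finset.sum_sub_distrib]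
    exact Finset.sum_congr rfl fun i _ => by simp; ring
  have hωsub2 : ∀ a b c, ω a (b - c) = ω a b - ω a c := by
    intro a b c
    rw [hω, hω, hω, ← Finset.sum_sub_distrib]
    exact Finset.sum_congr rfl fun i _ => by simp; ring
  have hvan : ∀ a b, (∀ i : Fin n, a.1 i * b.2 i - a.2 i * b.1 i = 0) → ω a b = 0 :=
    fun a b h => by rw [hω]; exact Finset.sum_eq_zero fun i _ => h i
  -- vanishing pairings
  have hXX : ∀ a b, a ∈ Xk → b ∈ Xk → ω a b = 0 := by
    intro a b ha hb
    exact hvan a b fun i => by simp [((mem_Xk a).mp ha).2, ((mem_Xk b).mp hb).2]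
  have hXW : ∀ a b, a ∈ Xk → b ∈ W' → ω a b = 0 := by
    intro a b ha hb
    obtain ⟨ha1, ha2⟩ := (mem_Xk a).mp ha
    refine hvan a b fun i => ?_
    by_cases hik : (i : ℕ) < k
    · simp [ha2, (((mem_W b).mp hb) i hik).2]
    · simp [ha2, ha1 i (Nat.le_of_not_lt hik)]
  have hWX : ∀ a b, a ∈ W' → b ∈ Xk → ω a b = 0 := by
    intro a b ha hb
    obtain ⟨hb1, hb2⟩ := (mem_Xk b).mp hb
    refine hvan a b fun i => ?_
    by_cases hik : (i : ℕ) < k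
    · simp [hb2, (((mem_W a).mp ha) i hik).2]
    · simp [hb2, hb1 i (Nat.le_of_not_lt hik)]
  have hWY : ∀ a b, a ∈ W' → b ∈ Yk → ω a b = 0 := by
    intro a b ha hb
    obtain ⟨hb1, hb2⟩ := (mem_Yk b).mp hb
    refine hvan a b fun i => ?_
    by_cases hik : (i : ℕ) < k
    · simp [hb1, (((mem_W a).mp ha) i hik).1]
    · simp [hb1, hb2 i (Nat.le_of_not_lt hik)]
  have hYW : ∀ a b, a ∈ Yk → b ∈ W' → ω a b = 0 := by
    intro a b ha hb
    obtain ⟨ha1, ha2⟩ := (mem_Yk a).mp ha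
    refine hvan a b fun i => ?_
    by_cases hik : (i : ℕ) < k
    · simp [ha1, (((mem_W b).mp hb) i hik).1]
    · simp [ha1, ha2 i (Nat.le_of_not_lt hik)]
  have hYY : ∀ a b, a ∈ Yk → b ∈ Yk → ω a b = 0 := by
    intro a b ha hb
    exact hvan a b fun i => by simp [((mem_Yk a).mp ha).1, ((mem_Yk b).mp hb).1]
  -- pairing with Sperp (∀ i < k, ·.2 i = 0)
  have hperp_of_S : ∀ a b, (∀ i : Fin n, (i : ℕ) < k → a.2 i = 0) → b ∈ Xk → ω a b = 0 := by
    intro a b ha hb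
    obtain ⟨hb1, hb2⟩ := (mem_Xk b).mp hb
    refine hvan a b fun i => ?_
    by_cases hik : (i : ℕ) < k
    · simp [hb2, ha i hik]
    · simp [hb2, hb1 i (Nat.le_of_not_lt hik)]
  have hXS : ∀ a b, a ∈ Xk → (∀ i : Fin n, (i : ℕ) < k → b.2 i = 0) → ω a b = 0 := by
    intro a b ha hb
    obtain ⟨ha1, ha2⟩ := (mem_Xk a).mp ha
    refine hvan a b fun i => ?_
    by_cases hik : (i : ℕ) < k
    · simp [ha2, hb i hik]
    · simp [ha2, ha1 i (Nat.le_of_not_lt hik)]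
  have hSperp_of : ∀ p, (∀ r ∈ Xk, ω p r = 0) → (∀ i : Fin n, (i : ℕ) < k → p.2 i = 0) := by
    intro p hp i hik
    have hXr : ((Pi.single i (1 : E), 0) : (Fin n → E) × (Fin n → E)) ∈ Xk := by
      rw [mem_Xk]
      exact ⟨fun j hj => Pi.single_eq_of_ne (fun hji => by subst hji; omega) 1, rfl⟩
    have h0 := hp _ hXr
    rw [hω] at h0
    simp only [Pi.single_apply, mul_ite, mul_one, mul_zero, Pi.zero_apply, zero_sub] at h0
    rw [Finset.sum_neg_distrib, neg_eq_zero, Finset.sum_ite_eq'] at h0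
    simpa using h0
  -- membership facts for the projections
  have hxiX : ∀ p : (Fin n → E) × (Fin n → E), auxXi k p ∈ Xk := by
    intro p
    rw [mem_Xk]
    exact ⟨fun i hi => by simp only [auxXi, if_neg (Nat.not_lt.mpr hi)], rfl⟩
  have hsgW : ∀ p : (Fin n → E) × (Fin n → E), auxSg k p ∈ W' := by
    intro p
    rw [mem_W]
    exact fun i hi => ⟨by simp only [auxSg, if_pos hi], by simp only [auxSg, if_pos hi]⟩
  have hrhY : ∀ p : (Fin n → E) × (Fin n → E), auxRh k p ∈ Yk := by
    intro p
    rw [mem_Yk]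
    exact ⟨rfl, fun i hi => by simp only [auxRh, if_neg (Nat.not_lt.mpr hi)]⟩
  have hsg0 : auxSg k (0 : (Fin n → E) × (Fin n → E)) = 0 := by
    refine Prod.ext ?_ ?_ <;> funext i <;> simp [auxSg]
  have hrh0 : auxRh k (0 : (Fin n → E) × (Fin n → E)) = 0 := by
    refine Prod.ext ?_ ?_ <;> funext i <;> simp [auxRh]
  -- identities on the pieces
  have hXxi : ∀ p ∈ Xk, auxXi k p = p ∧ auxSg k p = 0 ∧ auxRh k p = 0 := by
    intro p hp
    obtain ⟨hp1, hp2⟩ := (mem_Xk p).mp hp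
    have hp1' : ∀ i : Fin n, ¬((i : ℕ) < k) → p.1 i = 0 :=
      fun i h => hp1 i (Nat.le_of_not_lt h)
    refine ⟨Prod.ext ?_ ?_, Prod.ext ?_ ?_, Prod.ext ?_ ?_⟩ <;> funext i <;>
      by_cases hik : (i : ℕ) < k <;>
      simp [auxXi, auxSg, auxRh, hik, hp1', hp2]
  have hYrh : ∀ p ∈ Yk, auxXi k p = 0 ∧ auxSg k p = 0 ∧ auxRh k p = p := by
    intro p hp
    obtain ⟨hp1, hp2⟩ := (mem_Yk p).mp hp
    have hp2' : ∀ i : Fin n, ¬((i : ℕ) < k) → p.2 i = 0 :=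
      fun i h => hp2 i (Nat.le_of_not_lt h)
    refine ⟨Prod.ext ?_ ?_, Prod.ext ?_ ?_, Prod.ext ?_ ?_⟩ <;> funext i <;>
      by_cases hik : (i : ℕ) < k <;>
      simp [auxXi, auxSg, auxRh, hik, hp2', hp1]
  have hWsg : ∀ p ∈ W', auxXi k p = 0 ∧ auxSg k p = p ∧ auxRh k p = 0 := by
    intro p hp
    have hp' := (mem_W p).mp hp
    have hp1' : ∀ i : Fin n, (i : ℕ) < k → p.1 i = 0 := fun i h => (hp' i h).1
    have hp2' : ∀ i : Fin n, (i : ℕ) < k → p.2 i = 0 := fun i h => (hp' i h).2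
    refine ⟨Prod.ext ?_ ?_, Prod.ext ?_ ?_, Prod.ext ?_ ?_⟩ <;> funext i <;>
      by_cases hik : (i : ℕ) < k <;>
      simp [auxXi, auxSg, auxRh, hik, hp1', hp2']
  have hS_rh0 : ∀ p : (Fin n → E) × (Fin n → E),
      (∀ i : Fin n, (i : ℕ) < k → p.2 i = 0) → auxRh k p = 0 := by
    intro p hp
    refine Prod.ext rfl ?_
    funext i
    simp only [auxRh, Prod.snd_zero, Pi.zero_apply]
    by_cases hik : (i : ℕ) < k
    · rw [if_pos hik, hp i hik]
    · rw [if_neg hik]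
  have hS_xisg : ∀ p : (Fin n → E) × (Fin n → E),
      (∀ i : Fin n, (i : ℕ) < k → p.2 i = 0) → auxXi k p + auxSg k p = p := by
    intro p hp
    have := aux_decomp (k := k) p
    rwa [hS_rh0 p hp, add_zero] at this
  have hrh_eq : ∀ p : (Fin n → E) × (Fin n → E), auxRh k p = p - auxXi k p - auxSg k p := by
    intro p
    rw [sub_sub, eq_sub_iff_add_eq, add_comm]
    exact aux_decomp p
  have hsg_eq : ∀ p : (Fin n → E) × (Fin n → E),
      (∀ i : Fin n, (i : ℕ) < k → p.2 i = 0) → auxSg k p = p - auxXi k p := by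
    intro p hp
    rw [eq_sub_iff_add_eq, add_comm]
    exact hS_xisg p hp
  have hW_S : ∀ p ∈ W', ∀ i : Fin n, (i : ℕ) < k → p.2 i = 0 :=
    fun p hp i hik => (((mem_W p).mp hp) i hik).2
  -- closure lemmas
  have hXneg : ∀ p ∈ Xk, -p ∈ Xk := by
    intro p hp
    obtain ⟨hp1, hp2⟩ := (mem_Xk p).mp hp
    rw [mem_Xk]
    exact ⟨fun i hi => by simp [hp1 i hi], by simp [hp2]⟩
  have hL_addX : ∀ p ∈ Lk, ∀ x ∈ Xk, p + x ∈ Lk := by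
    intro p hp x hx
    obtain ⟨hp1, hp2⟩ := (mem_Lk p).mp hp
    obtain ⟨hx1, hx2⟩ := (mem_Xk x).mp hx
    rw [mem_Lk]
    constructor
    · intro i hik
      simp [hp1 i hik, hx2]
    · intro i hik
      obtain ⟨⟨a, ha⟩, ⟨b, hb⟩⟩ := hp2 i hik
      exact ⟨⟨a, by simp [ha, hx1 i hik]⟩, ⟨b, by simp [hb, hx2]⟩⟩
  have hX_addL : ∀ x ∈ Xk, ∀ p ∈ Lk, x + p ∈ Lk := by
    intro x hx p hp
    rw [add_comm]
    exact hL_addX p hp x hx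
  have hX_sub_L : ∀ p ∈ Xk, p ∈ Lk := by
    intro p hp
    obtain ⟨hp1, hp2⟩ := (mem_Xk p).mp hp
    rw [mem_Lk]
    refine ⟨fun i _ => by simp [hp2], fun i hik => ⟨⟨0, by simp [hp1 i hik]⟩, ⟨0, by simp [hp2]⟩⟩⟩
  have hX_smul : ∀ p ∈ Xk, ∀ c : E, c • p ∈ Xk := by
    intro p hp c
    obtain ⟨hp1, hp2⟩ := (mem_Xk p).mp hp
    rw [mem_Xk]
    exact ⟨fun i hi => by simp [hp1 i hi], by simp [hp2]⟩
  -- the key rigidity lemma: Lk ∩ τ⁻¹ Lk = Xk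
  have hLX : ∀ p, p ∈ Lk → τ • p ∈ Lk → p ∈ Xk := by
    intro p hp hq
    obtain ⟨hp1, hp2⟩ := (mem_Lk p).mp hp
    obtain ⟨-, hq2⟩ := (mem_Lk _).mp hq
    rw [mem_Xk]
    constructor
    · intro i hik
      obtain ⟨a, ha⟩ := (hp2 i hik).1
      obtain ⟨a', ha'⟩ := (hq2 i hik).1
      have hsm : (τ • p).1 i = τ * p.1 i := rfl
      rw [hsm, ha] at ha'
      by_cases ha0 : a = 0
      · rw [ha, ha0, map_zero]
      · exfalso
        refine htF (a' * a⁻¹) ?_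
        rw [map_mul, map_inv₀, ← ha', mul_assoc,
          mul_inv_cancel₀ ((map_ne_zero (algebraMap F E)).mpr ha0), mul_one]
      -- done
    · funext i
      by_cases hik : (i : ℕ) < k
      · exact hp1 i hik
      · have hik' := Nat.le_of_not_lt hik
        obtain ⟨b, hb⟩ := (hp2 i hik').2
        obtain ⟨b', hb'⟩ := (hq2 i hik').2
        have hsm : (τ • p).2 i = τ * p.2 i := rfl
        rw [hsm, hb, ← mul_assoc, ← pow_two, hdsq, ← map_mul] at hb'
        by_cases hb0 : b' = 0
        · rw [hb0, map_zero, mul_zero] at hb'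
          have : d * b = 0 := by
            exact (algebraMap F E).injective (by rw [hb', map_zero])
          have hbz : b = 0 := by
            rcases mul_eq_zero.mp this with h | h
            · exact absurd h hd0
            · exact h
          show p.2 i = 0
          rw [hb, hbz, map_zero, mul_zero]
        · exfalso
          refine htF (d * b * b'⁻¹) ?_
          rw [map_mul, map_inv₀, hb', mul_assoc,
            mul_inv_cancel₀ ((map_ne_zero (algebraMap F E)).mpr hb0), mul_one]
  constructor
  · -- forward direction
    rintro ⟨h1, h2⟩
    have hg' : ∀ p r, ω (g.symm p) (g.symm r) = ω p r := by
      intro p r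
      conv_lhs => rw [← hg (g.symm p) (g.symm r)]
      rw [g.apply_symm_apply, g.apply_symm_apply]
    have hgX : ∀ p ∈ Xk, g p ∈ Xk := by
      intro p hp
      apply hLX
      · exact h1 p (hX_sub_L p hp)
      · rw [← map_smul]
        exact h1 _ (hX_sub_L _ (hX_smul p hp τ))
    have hgX' : ∀ p ∈ Xk, g.symm p ∈ Xk := by
      intro p hp
      apply hLX
      · exact h2 p (hX_sub_L p hp)
      · rw [← map_smul]
        exact h2 _ (hX_sub_L _ (hX_smul p hp τ))
    have hgS : ∀ p : (Fin n → E) × (Fin n → E), (∀ i : Fin n, (i : ℕ) < k → p.2 i = 0) →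
        (∀ i : Fin n, (i : ℕ) < k → (g p).2 i = 0) := by
      intro p hp
      apply hSperp_of
      intro r hr
      have h := hg p (g.symm r)
      rw [g.apply_symm_apply] at h
      rw [h]
      exact hperp_of_S p _ hp (hgX' r hr)
    have hgS' : ∀ p : (Fin n → E) × (Fin n → E), (∀ i : Fin n, (i : ℕ) < k → p.2 i = 0) →
        (∀ i : Fin n, (i : ℕ) < k → (g.symm p).2 i = 0) := by
      intro p hp
      apply hSperp_of
      intro r hr
      have h := hg' p (g r)
      rw [g.symm_apply_apply] at h
      rw [h]
      exact hperp_of_S p _ hp (hgX r hr)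
    -- the Levi projection of g
    let m₀ : ((Fin n → E) × (Fin n → E)) →ₗ[E] ((Fin n → E) × (Fin n → E)) :=
      { toFun := fun p => g (auxXi k p) + auxSg k (g (auxSg k p)) + auxRh k (g (auxRh k p))
        map_add' := by
          intro p q
          rw [auxXi_add, auxSg_add, auxRh_add, map_add, map_add, map_add, auxSg_add, auxRh_add]
          abel
        map_smul' := by
          intro c p
          rw [RingHom.id_apply, auxXi_smul, auxSg_smul, auxRh_smul, map_smul, map_smul,
            map_smul, auxSg_smul, auxRh_smul, smul_add, smul_add] }
    have hm0app : ∀ p, m₀ p =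
        g (auxXi k p) + auxSg k (g (auxSg k p)) + auxRh k (g (auxRh k p)) := fun p => rfl
    have hm0inj : Function.Injective m₀ := by
      have hker : ∀ p, m₀ p = 0 → p = 0 := by
        intro p hp0
        rw [hm0app] at hp0
        set A := g (auxXi k p) with hA
        set B := auxSg k (g (auxSg k p)) with hB
        set C := auxRh k (g (auxRh k p)) with hC
        have hAX : A ∈ Xk := hgX _ (hxiX p)
        have hBW := (mem_W B).mp (hsgW _)
        have hCY : C ∈ Yk := hrhY _
        obtain ⟨hA1, hA2⟩ := (mem_Xk A).mp hAX
        obtain ⟨hC1, hC2⟩ := (mem_Yk C).mp hCY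
        have hco1 : ∀ i, A.1 i + B.1 i + C.1 i = 0 := by
          intro i
          have h := congrFun (congrArg Prod.fst hp0) i
          simpa using h
        have hco2 : ∀ i, A.2 i + B.2 i + C.2 i = 0 := by
          intro i
          have h := congrFun (congrArg Prod.snd hp0) i
          simpa using h
        have hB0 : B = 0 := by
          refine Prod.ext ?_ ?_ <;> funext i
          · by_cases hik : (i : ℕ) < k
            · exact (hBW i hik).1
            · simpa [hA1 i (Nat.le_of_not_lt hik), hC1] using hco1 i
          · by_cases hik : (i : ℕ) < k
            · exact (hBW i hik).2
            · simpa [hA2, hC2 i (Nat.le_of_not_lt hik)] using hco2 i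
        have hA0 : A = 0 := by
          refine Prod.ext ?_ ?_ <;> funext i
          · by_cases hik : (i : ℕ) < k
            · simpa [hB0, hC1] using hco1 i
            · exact hA1 i (Nat.le_of_not_lt hik)
          · simp [hA2]
        have hC0 : C = 0 := by
          refine Prod.ext ?_ ?_ <;> funext i
          · simp [hC1]
          · by_cases hik : (i : ℕ) < k
            · simpa [hA2, hB0] using hco2 i
            · exact hC2 i (Nat.le_of_not_lt hik)
        have hA0' : g (auxXi k p) = 0 := by rw [← hA]; exact hA0
        have hB0' : auxSg k (g (auxSg k p)) = 0 := by rw [← hB]; exact hB0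
        have hC0' : auxRh k (g (auxRh k p)) = 0 := by rw [← hC]; exact hC0
        have hxi0 : auxXi k p = 0 := g.map_eq_zero_iff.mp hA0' 
        have hgsgS : ∀ i : Fin n, (i : ℕ) < k → (g (auxSg k p)).2 i = 0 :=
          hgS _ (hW_S _ (hsgW p))
        have hsgXk : g (auxSg k p) ∈ Xk := by
          rw [mem_Xk]
          constructor
          · intro i hik
            have h := congrFun (congrArg Prod.fst hB0') i
            simpa [auxSg, if_neg (Nat.not_lt.mpr hik)] using h
          · funext i
            by_cases hik : (i : ℕ) < k
            · simpa using hgsgS i hik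
            · have h := congrFun (congrArg Prod.snd hB0') i
              simpa [auxSg, if_neg hik] using h
        have hsgX : auxSg k p ∈ Xk := by
          have h := hgX' _ hsgXk
          rwa [g.symm_apply_apply] at h
        have hsgp0 : auxSg k p = 0 := by
          obtain ⟨hs1, hs2⟩ := (mem_Xk _).mp hsgX
          refine Prod.ext ?_ ?_ <;> funext i
          · by_cases hik : (i : ℕ) < k
            · simp [auxSg, if_pos hik]
            · simpa using hs1 i (Nat.le_of_not_lt hik)
          · simp [hs2]
        have hgrhS : ∀ i : Fin n, (i : ℕ) < k → (g (auxRh k p)).2 i = 0 := by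
          intro i hik
          have h := congrFun (congrArg Prod.snd hC0') i
          simpa [auxRh, if_pos hik] using h
        have hrhS : ∀ i : Fin n, (i : ℕ) < k → (auxRh k p).2 i = 0 := by
          intro i hik
          have h := hgS' _ hgrhS i hik
          rwa [g.symm_apply_apply] at h
        have hrhp0 : auxRh k p = 0 := by
          refine Prod.ext rfl ?_
          funext i
          by_cases hik : (i : ℕ) < k
          · simpa using hrhS i hik
          · simp [auxRh, if_neg hik]
        have hdec := aux_decomp (k := k) p
        rw [hxi0, hsgp0, hrhp0] at hdec
        simpa using hdec.symm
      exact LinearMap.ker_eq_bot.mp (LinearMap.ker_eq_bot'.mpr hker)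
    have hm0surj : Function.Surjective m₀ := LinearMap.injective_iff_surjective.mp hm0inj
    let m : ((Fin n → E) × (Fin n → E)) ≃ₗ[E] ((Fin n → E) × (Fin n → E)) :=
      LinearEquiv.ofBijective m₀ ⟨hm0inj, hm0surj⟩
    have hmapp : ∀ p, m p = g (auxXi k p) + auxSg k (g (auxSg k p)) + auxRh k (g (auxRh k p)) :=
      fun p => rfl
    let u : ((Fin n → E) × (Fin n → E)) ≃ₗ[E] ((Fin n → E) × (Fin n → E)) := g.trans m.symm
    have huapp : ∀ p, u p = m.symm (g p) := fun p => rfl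
    -- m on the pieces
    have hmX : ∀ p ∈ Xk, m p = g p := by
      intro p hp
      obtain ⟨e1, e2, e3⟩ := hXxi p hp
      rw [hmapp, e1, e2, e3, map_zero, hsg0, hrh0, add_zero, add_zero]
    have hmY : ∀ p ∈ Yk, m p = auxRh k (g p) := by
      intro p hp
      obtain ⟨e1, e2, e3⟩ := hYrh p hp
      rw [hmapp, e1, e2, e3, map_zero, hsg0, zero_add, zero_add]
    have hmW : ∀ p ∈ W', m p = auxSg k (g p) := by
      intro p hp
      obtain ⟨e1, e2, e3⟩ := hWsg p hp
      rw [hmapp, e1, e2, e3, map_zero, hrh0, zero_add, add_zero]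
    have hmS : ∀ p : (Fin n → E) × (Fin n → E), (∀ i : Fin n, (i : ℕ) < k → p.2 i = 0) →
        m p = g p - auxXi k (g (auxSg k p)) := by
      intro p hpS
      rw [hmapp, hS_rh0 p hpS, map_zero, hrh0, add_zero,
        hsg_eq _ (hgS _ (hW_S _ (hsgW p))), ← add_sub_assoc, ← map_add, hS_xisg p hpS]
    -- symplecticity of m
    have hexpand : ∀ a b c a' b' c' : (Fin n → E) × (Fin n → E),
        ω (a + b + c) (a' + b' + c') = ω a a' + ω a b' + ω a c' + (ω b a' + ω b b' + ω b c')
          + (ω c a' + ω c b' + ω c c') := by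
      intro a b c a' b' c'
      rw [hωadd1, hωadd1, hωadd2, hωadd2, hωadd2, hωadd2, hωadd2, hωadd2]
    have hmsymp : ∀ p r, ω (m p) (m r) = ω p r := by
      intro p r
      have t1 : ω (g (auxXi k p)) (g (auxXi k r)) = ω (auxXi k p) (auxXi k r) := hg _ _
      have t2 : ω (g (auxXi k p)) (auxSg k (g (auxSg k r))) = ω (auxXi k p) (auxSg k r) := by
        rw [hXW _ _ (hgX _ (hxiX p)) (hsgW _), hXW _ _ (hxiX p) (hsgW r)]
      have t3 : ω (g (auxXi k p)) (auxRh k (g (auxRh k r))) = ω (auxXi k p) (auxRh k r) := by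
        rw [hrh_eq (g (auxRh k r)), hωsub2, hωsub2, hg,
          hXX _ _ (hgX _ (hxiX p)) (hxiX _), hXW _ _ (hgX _ (hxiX p)) (hsgW _)]
        simp
      have t4 : ω (auxSg k (g (auxSg k p))) (g (auxXi k r)) = ω (auxSg k p) (auxXi k r) := by
        rw [hWX _ _ (hsgW _) (hgX _ (hxiX r)), hWX _ _ (hsgW p) (hxiX r)]
      have t5 : ω (auxSg k (g (auxSg k p))) (auxSg k (g (auxSg k r)))
          = ω (auxSg k p) (auxSg k r) := by
        rw [hsg_eq _ (hgS _ (hW_S _ (hsgW p))), hsg_eq _ (hgS _ (hW_S _ (hsgW r))),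
          hωsub1, hωsub2, hωsub2, hg,
          hperp_of_S _ _ (hgS _ (hW_S _ (hsgW p))) (hxiX _),
          hXS _ _ (hxiX _) (hgS _ (hW_S _ (hsgW r))),
          hXX _ _ (hxiX _) (hxiX _)]
        simp
      have t6 : ω (auxSg k (g (auxSg k p))) (auxRh k (g (auxRh k r)))
          = ω (auxSg k p) (auxRh k r) := by
        rw [hWY _ _ (hsgW _) (hrhY _), hWY _ _ (hsgW p) (hrhY _)]
      have t7 : ω (auxRh k (g (auxRh k p))) (g (auxXi k r)) = ω (auxRh k p) (auxXi k r) := by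
        rw [hrh_eq (g (auxRh k p)), hωsub1, hωsub1, hg,
          hXX _ _ (hxiX _) (hgX _ (hxiX r)), hWX _ _ (hsgW _) (hgX _ (hxiX r))]
        simp
      have t8 : ω (auxRh k (g (auxRh k p))) (auxSg k (g (auxSg k r)))
          = ω (auxRh k p) (auxSg k r) := by
        rw [hYW _ _ (hrhY _) (hsgW _), hYW _ _ (hrhY _) (hsgW r)]
      have t9 : ω (auxRh k (g (auxRh k p))) (auxRh k (g (auxRh k r)))
          = ω (auxRh k p) (auxRh k r) := by
        rw [hYY _ _ (hrhY _) (hrhY _), hYY _ _ (hrhY _) (hrhY _)]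
      conv_rhs => rw [← aux_decomp (k := k) p, ← aux_decomp (k := k) r]
      rw [hmapp, hmapp, hexpand, hexpand, t1, t2, t3, t4, t5, t6, t7, t8, t9]
    refine ⟨m, u, hmsymp, ?_, ?_, ⟨?_, ?_, ?_, ?_⟩, ⟨?_, ?_⟩⟩
    · -- u symplectic
      intro p r
      calc ω (u p) (u r) = ω (m (u p)) (m (u r)) := (hmsymp _ _).symm
        _ = ω (g p) (g r) := by rw [huapp, huapp, m.apply_symm_apply, m.apply_symm_apply]
        _ = ω p r := hg _ _
    · -- g = m ∘ u
      intro p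
      rw [huapp, m.apply_symm_apply]
    · -- m preserves Xk
      intro p hp
      rw [hmX p hp]
      exact hgX p hp
    · -- m preserves Yk
      intro p hp
      rw [hmY p hp]
      exact hrhY _
    · -- m preserves W'
      intro p hp
      rw [hmW p hp]
      exact hsgW _
    · -- m preserves cτWF
      intro p hp
      obtain ⟨hpW, hpF⟩ := (mem_C p).mp hp
      rw [hmW p hpW]
      have hq : τ • (τ⁻¹ • p) = p := by rw [smul_smul, mul_inv_cancel₀ hτ, one_smul]
      have hqL : τ⁻¹ • p ∈ Lk := by
        rw [mem_Lk]
        constructor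
        · intro i hik
          show τ⁻¹ * p.2 i = 0
          rw [((mem_W p).mp hpW i hik).2, mul_zero]
        · intro i hik
          obtain ⟨⟨a, ha⟩, ⟨b, hb⟩⟩ := hpF i hik
          constructor
          · refine ⟨a, ?_⟩
            show τ⁻¹ * p.1 i = _
            rw [ha, ← mul_assoc, inv_mul_cancel₀ hτ, one_mul]
          · refine ⟨d⁻¹ * b, ?_⟩
            show τ⁻¹ * p.2 i = τ * algebraMap F E (d⁻¹ * b)
            rw [hb, map_mul, map_inv₀, ← hdsq, pow_two]
            field_simp
      have hgqL := h1 _ hqL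
      obtain ⟨hgq1, hgq2⟩ := (mem_Lk _).mp hgqL
      have hrw : auxSg k (g p) = τ • auxSg k (g (τ⁻¹ • p)) := by
        rw [← auxSg_smul, ← map_smul, hq]
      rw [hrw, mem_C]
      constructor
      · rw [mem_W]
        intro i hik
        constructor
        · show τ * (auxSg k (g (τ⁻¹ • p))).1 i = 0
          simp only [auxSg, if_pos hik, mul_zero]
        · show τ * (auxSg k (g (τ⁻¹ • p))).2 i = 0
          simp only [auxSg, if_pos hik, mul_zero]
      · intro i hik
        obtain ⟨⟨a, ha⟩, ⟨b, hb⟩⟩ := hgq2 i hik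
        constructor
        · refine ⟨a, ?_⟩
          show τ * (auxSg k (g (τ⁻¹ • p))).1 i = _
          simp only [auxSg, if_neg (Nat.not_lt.mpr hik)]
          rw [ha]
        · refine ⟨d * b, ?_⟩
          show τ * (auxSg k (g (τ⁻¹ • p))).2 i = _
          simp only [auxSg, if_neg (Nat.not_lt.mpr hik)]
          rw [hb, ← mul_assoc, ← pow_two, hdsq, map_mul]
    · -- u fixes Xk pointwise
      intro p hp
      rw [huapp, ← hmX p hp, m.symm_apply_apply]
    · -- unipotence of u
      intro p hp
      have hpS : ∀ i : Fin n, (i : ℕ) < k → p.2 i = 0 := hSperp_of p hp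
      have hxX : g.symm (auxXi k (g (auxSg k p))) ∈ Xk := hgX' _ (hxiX _)
      have hmpx : m (p + g.symm (auxXi k (g (auxSg k p)))) = g p := by
        rw [map_add, hmS p hpS, hmX _ hxX, g.apply_symm_apply]
        abel
      have hup : u p = p + g.symm (auxXi k (g (auxSg k p))) := by
        rw [huapp, ← hmpx, m.symm_apply_apply]
      rw [hup, add_sub_cancel_left]
      exact hxX
  · -- backward direction
    rintro ⟨m, u, hmsymp, husymp, hgmu, ⟨hmXb, hmYb, hmWb, hmCb⟩, ⟨huXb, huNb⟩⟩
    -- u maps Lk into Lk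
    have huL : ∀ p ∈ Lk, u p ∈ Lk := by
      intro p hp
      obtain ⟨hp1, -⟩ := (mem_Lk p).mp hp
      have hx := huNb p (fun r hr => hperp_of_S p r hp1 hr)
      have hup : u p = p + (u p - p) := by abel
      rw [hup]
      exact hL_addX p hp _ hx
    -- m maps Lk into Lk
    have hmL : ∀ p ∈ Lk, m p ∈ Lk := by
      intro p hp
      obtain ⟨hp1, hp2⟩ := (mem_Lk p).mp hp
      have hdec : p = auxXi k p + auxSg k p := (hS_xisg p hp1).symm
      have hτsgC : τ • auxSg k p ∈ cτWF := by
        rw [mem_C]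
        constructor
        · rw [mem_W]
          intro i hik
          constructor
          · show τ * (auxSg k p).1 i = 0
            simp only [auxSg, if_pos hik, mul_zero]
          · show τ * (auxSg k p).2 i = 0
            simp only [auxSg, if_pos hik, mul_zero]
        · intro i hik
          obtain ⟨⟨a, ha⟩, ⟨b, hb⟩⟩ := hp2 i hik
          constructor
          · refine ⟨a, ?_⟩
            show τ * (auxSg k p).1 i = τ * algebraMap F E a
            simp only [auxSg, if_neg (Nat.not_lt.mpr hik), ha]
          · refine ⟨d * b, ?_⟩
            show τ * (auxSg k p).2 i = algebraMap F E (d * b)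
            simp only [auxSg, if_neg (Nat.not_lt.mpr hik), hb]
            rw [← mul_assoc, ← pow_two, hdsq, map_mul]
      have hmτsg := hmCb _ hτsgC
      rw [map_smul] at hmτsg
      obtain ⟨hW1, hF1⟩ := (mem_C _).mp hmτsg
      have hmsgL : m (auxSg k p) ∈ Lk := by
        rw [mem_Lk]
        constructor
        · intro i hik
          have h2 : τ * (m (auxSg k p)).2 i = 0 := ((mem_W _).mp hW1 i hik).2
          rcases mul_eq_zero.mp h2 with h | h
          · exact absurd h hτ
          · exact h
        · intro i hik
          obtain ⟨⟨a, ha⟩, ⟨b, hb⟩⟩ := hF1 i hik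
          have ha' : τ * (m (auxSg k p)).1 i = τ * algebraMap F E a := ha
          have hb' : τ * (m (auxSg k p)).2 i = algebraMap F E b := hb
          refine ⟨⟨a, mul_left_cancel₀ hτ ha'⟩, ⟨d⁻¹ * b, mul_left_cancel₀ hτ ?_⟩⟩
          rw [hb', ← mul_assoc, ← pow_two, hdsq, ← map_mul, mul_inv_cancel_left₀ hd0]
      have hmxiX : m (auxXi k p) ∈ Xk := hmXb _ (hxiX p)
      rw [hdec, map_add]
      exact hX_addL _ hmxiX _ hmsgL
    -- m.symm maps Lk into Lk (finite-dimensionality over F)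
    have hVfd : FiniteDimensional F ((Fin n → E) × (Fin n → E)) := Module.Finite.trans E _
    let NF : Submodule F ((Fin n → E) × (Fin n → E)) :=
      { carrier := Lk
        add_mem' := by
          intro a b ha hb
          obtain ⟨ha1, ha2⟩ := (mem_Lk a).mp ha
          obtain ⟨hb1, hb2⟩ := (mem_Lk b).mp hb
          rw [mem_Lk]
          constructor
          · intro i hik
            show a.2 i + b.2 i = 0
            rw [ha1 i hik, hb1 i hik, add_zero]
          · intro i hik
            obtain ⟨⟨x1, hx1⟩, ⟨y1, hy1⟩⟩ := ha2 i hik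
            obtain ⟨⟨x2, hx2⟩, ⟨y2, hy2⟩⟩ := hb2 i hik
            constructor
            · exact ⟨x1 + x2, by show a.1 i + b.1 i = _; rw [hx1, hx2, map_add]⟩
            · exact ⟨y1 + y2, by show a.2 i + b.2 i = _; rw [hy1, hy2, map_add, mul_add]⟩
        zero_mem' := by
          show (0 : (Fin n → E) × (Fin n → E)) ∈ Lk
          rw [mem_Lk]
          exact ⟨fun i _ => rfl, fun i _ => ⟨⟨0, by simp⟩, ⟨0, by simp⟩⟩⟩
        smul_mem' := by
          intro c a ha
          obtain ⟨ha1, ha2⟩ := (mem_Lk a).mp ha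
          show c • a ∈ Lk
          rw [mem_Lk]
          constructor
          · intro i hik
            show c • a.2 i = 0
            rw [ha1 i hik, smul_zero]
          · intro i hik
            obtain ⟨⟨x, hx⟩, ⟨y, hy⟩⟩ := ha2 i hik
            constructor
            · refine ⟨c * x, ?_⟩
              show c • a.1 i = _
              rw [hx, Algebra.smul_def, map_mul]
            · refine ⟨c * y, ?_⟩
              show c • a.2 i = _
              rw [hy, Algebra.smul_def, map_mul, ← mul_assoc, mul_comm (algebraMap F E c) τ,
                mul_assoc] }
    have hmemNF : ∀ p : (Fin n → E) × (Fin n → E), p ∈ NF ↔ p ∈ Lk := fun p => Iff.rfl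
    let mF := m.restrictScalars F
    have hmapNF : Submodule.map (mF : ((Fin n → E) × (Fin n → E)) →ₗ[F] _) NF = NF := by
      apply Submodule.eq_of_le_of_finrank_le
      · rintro q ⟨r, hr, rfl⟩
        exact (hmemNF _).mpr (hmL r ((hmemNF r).mp hr))
      · rw [LinearEquiv.finrank_map_eq]
    have hmsymmL : ∀ p ∈ Lk, m.symm p ∈ Lk := by
      intro p hp
      have hmem : p ∈ Submodule.map (mF : ((Fin n → E) × (Fin n → E)) →ₗ[F] _) NF := by
        rw [hmapNF]; exact (hmemNF p).mpr hp
      obtain ⟨q, hq, hqe⟩ := hmem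
      have : m.symm p = q := by
        rw [← hqe]
        exact m.symm_apply_apply q
      rw [this]
      exact (hmemNF q).mp hq
    -- u.symm maps Lk into Lk
    have husymmL : ∀ p ∈ Lk, u.symm p ∈ Lk := by
      intro p hp
      obtain ⟨hp1, -⟩ := (mem_Lk p).mp hp
      have hS' : ∀ i : Fin n, (i : ℕ) < k → (u.symm p).2 i = 0 := by
        apply hSperp_of
        intro r hr
        have h := husymp (u.symm p) r
        rw [u.apply_symm_apply, huXb r hr] at h
        rw [← h]
        exact hperp_of_S p r hp1 hr
      have hx := huNb (u.symm p) (fun r hr => hperp_of_S _ r hS' hr)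
      rw [u.apply_symm_apply] at hx
      have heq : u.symm p = p + -(p - u.symm p) := by abel
      rw [heq]
      exact hL_addX p hp _ (hXneg _ hx)
    constructor
    · intro p hp
      rw [hgmu p]
      exact hmL _ (huL p hp)
    · intro p hp
      have hgsymm : g.symm p = u.symm (m.symm p) := by
        rw [LinearEquiv.symm_apply_eq, hgmu, u.apply_symm_apply, m.apply_symm_apply]
      rw [hgsymm]
      exact husymmL _ (hmsymmL p hp)
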